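/- Let R be a commutative ring and z ∈ R. Let f : F → K be a quasi-isomorphism of bounded cochain complexes of R-modules such that multiplication by z is injective on every term F^n and K^n and on every cohomology module H^n(F) and H^n(K). Then the induced chain map F/zF → K/zK between the termwise quotient complexes is again a quasi-isomorphism. -/

import Mathlib

open CategoryTheory

/-- The submodule `z·M` of a module `M`, i.e. the range of multiplication by `z`. -/
noncomputable def zSMulRange {R : Type*} [CommRing R] (z : R) (M : ModuleCat R) :
    Submodule R M :=
  LinearMap.range (z • (LinearMap.id : M →ₗ[R] M))

theorem modz_le {R : Type*} [CommRing R] (z : R) (K : CochainComplex (ModuleCat R) ℤ)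
    (i j : ℤ) :
    zSMulRange z (K.X i) ≤ (zSMulRange z (K.X j)).comap (K.d i j).hom := by
  rintro x ⟨y, rfl⟩
  exact ⟨(K.d i j).hom y, by simp⟩

/-- The termwise quotient complex `K/zK` of a cochain complex of `R`-modules. -/
noncomputable def modz {R : Type*} [CommRing R] (z : R)
    (K : CochainComplex (ModuleCat R) ℤ) : CochainComplex (ModuleCat R) ℤ where
  X n := ModuleCat.of R (K.X n ⧸ zSMulRange z (K.X n))
  d i j := ModuleCat.ofHom (Submodule.mapQ _ _ (K.d i j).hom (modz_le z K i j))
  shape i j h := by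
    have hz : K.d i j = 0 := K.shape i j h
    apply ModuleCat.hom_ext
    apply Submodule.linearMap_qext
    apply LinearMap.ext
    intro y
    have hy : (K.d i j).hom y = 0 := by rw [hz]; rfl
    show ((zSMulRange z (K.X i)).mapQ (zSMulRange z (K.X j)) (K.d i j).hom (modz_le z K i j))
        ((zSMulRange z (K.X i)).mkQ y) = 0
    rw [Submodule.mkQ_apply, Submodule.mapQ_apply, hy, Submodule.Quotient.mk_zero]
  d_comp_d' i j k hij hjk := by
    apply ModuleCat.hom_ext
    apply Submodule.linearMap_qext
    apply LinearMap.ext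
    intro y
    have h0 : (K.d j k).hom ((K.d i j).hom y) = 0 := by
      have hdd := K.d_comp_d i j k
      calc (K.d j k).hom ((K.d i j).hom y) = (K.d i j ≫ K.d j k).hom y := rfl
        _ = (0 : K.X i ⟶ K.X k).hom y := by rw [hdd]
        _ = 0 := rfl
    show ((zSMulRange z (K.X j)).mapQ (zSMulRange z (K.X k)) (K.d j k).hom (modz_le z K j k))
        (((zSMulRange z (K.X i)).mapQ (zSMulRange z (K.X j)) (K.d i j).hom (modz_le z K i j))
          ((zSMulRange z (K.X i)).mkQ y)) = 0
    rw [Submodule.mkQ_apply, Submodule.mapQ_apply, Submodule.mapQ_apply, h0,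
      Submodule.Quotient.mk_zero]

/-- Multiplication by `z`, as a chain map `K ⟶ K`. -/
noncomputable def zSMulMap {R : Type*} [CommRing R] (z : R)
    (K : CochainComplex (ModuleCat R) ℤ) : K ⟶ K where
  f n := ModuleCat.ofHom (z • LinearMap.id : K.X n →ₗ[R] K.X n)
  comm' i j hij := by
    apply ModuleCat.hom_ext
    apply LinearMap.ext
    intro x
    show (K.d i j).hom ((z • LinearMap.id : K.X i →ₗ[R] K.X i) x)
        = (z • LinearMap.id : K.X j →ₗ[R] K.X j) ((K.d i j).hom x)
    simp

/-- The termwise quotient chain map `K ⟶ K/zK`. -/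
noncomputable def modzπ {R : Type*} [CommRing R] (z : R)
    (K : CochainComplex (ModuleCat R) ℤ) : K ⟶ modz z K where
  f n := ModuleCat.ofHom (zSMulRange z (K.X n)).mkQ
  comm' i j hij := by
    apply ModuleCat.hom_ext
    apply LinearMap.ext
    intro x
    show ((zSMulRange z (K.X i)).mapQ (zSMulRange z (K.X j)) (K.d i j).hom (modz_le z K i j))
        ((zSMulRange z (K.X i)).mkQ x) = (zSMulRange z (K.X j)).mkQ ((K.d i j).hom x)
    rw [Submodule.mkQ_apply, Submodule.mkQ_apply, Submodule.mapQ_apply]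

theorem modzMap_le {R : Type*} [CommRing R] (z : R) {F K : CochainComplex (ModuleCat R) ℤ}
    (f : F ⟶ K) (n : ℤ) :
    zSMulRange z (F.X n) ≤ (zSMulRange z (K.X n)).comap (f.f n).hom := by
  rintro x ⟨y, rfl⟩
  exact ⟨(f.f n).hom y, by simp⟩

/-- The chain map `F/zF ⟶ K/zK` induced by a chain map `f : F ⟶ K` on the termwise
quotient complexes. -/
noncomputable def modzMap {R : Type*} [CommRing R] (z : R)
    {F K : CochainComplex (ModuleCat R) ℤ} (f : F ⟶ K) : modz z F ⟶ modz z K where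
  f n := ModuleCat.ofHom (Submodule.mapQ _ _ (f.f n).hom (modzMap_le z f n))
  comm' i j hij := by
    apply ModuleCat.hom_ext
    apply Submodule.linearMap_qext
    apply LinearMap.ext
    intro x
    have hc : (K.d i j).hom ((f.f i).hom x) = (f.f j).hom ((F.d i j).hom x) := by
      calc (K.d i j).hom ((f.f i).hom x) = (f.f i ≫ K.d i j).hom x := rfl
        _ = (F.d i j ≫ f.f j).hom x := by rw [f.comm i j]
        _ = (f.f j).hom ((F.d i j).hom x) := rfl
    show ((zSMulRange z (K.X i)).mapQ (zSMulRange z (K.X j)) (K.d i j).hom (modz_le z K i j))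
        (((zSMulRange z (F.X i)).mapQ (zSMulRange z (K.X i)) (f.f i).hom (modzMap_le z f i))
          ((zSMulRange z (F.X i)).mkQ x))
      = ((zSMulRange z (F.X j)).mapQ (zSMulRange z (K.X j)) (f.f j).hom (modzMap_le z f j))
        (((zSMulRange z (F.X i)).mapQ (zSMulRange z (F.X j)) (F.d i j).hom (modz_le z F i j))
          ((zSMulRange z (F.X i)).mkQ x))
    rw [Submodule.mkQ_apply, Submodule.mapQ_apply, Submodule.mapQ_apply,
      Submodule.mapQ_apply, Submodule.mapQ_apply, hc]


/-- The short exact sequence `K --z--> K --π--> K/zK` of cochain complexes. -/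
noncomputable def modzSES {R : Type*} [CommRing R] (z : R)
    (K : CochainComplex (ModuleCat R) ℤ) :
    CategoryTheory.ShortComplex (CochainComplex (ModuleCat R) ℤ) :=
  CategoryTheory.ShortComplex.mk (zSMulMap z K) (modzπ z K) (by
    ext n x
    show (zSMulRange z (K.X n)).mkQ ((z • LinearMap.id : K.X n →ₗ[R] K.X n) x) = 0
    rw [Submodule.mkQ_apply, Submodule.Quotient.mk_eq_zero]
    exact ⟨x, rfl⟩)

theorem modzSES_shortExact {R : Type*} [CommRing R] (z : R)
    (K : CochainComplex (ModuleCat R) ℤ)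
    (hinj : ∀ n : ℤ, Function.Injective fun x : K.X n => z • x) :
    (modzSES z K).ShortExact := by
  rw [HomologicalComplex.shortExact_iff_degreewise_shortExact]
  intro n
  have hmono : CategoryTheory.Mono ((modzSES z K).map
      (HomologicalComplex.eval (ModuleCat R) (ComplexShape.up ℤ) n)).f := by
    rw [ModuleCat.mono_iff_injective]
    intro a b hab
    exact hinj n hab
  have hepi : CategoryTheory.Epi ((modzSES z K).map
      (HomologicalComplex.eval (ModuleCat R) (ComplexShape.up ℤ) n)).g := by
    rw [ModuleCat.epi_iff_surjective]
    exact Submodule.mkQ_surjective _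
  have hexact : ((modzSES z K).map
      (HomologicalComplex.eval (ModuleCat R) (ComplexShape.up ℤ) n)).Exact := by
    rw [CategoryTheory.ShortComplex.moduleCat_exact_iff]
    intro x hx
    have hx' : x ∈ zSMulRange z (K.X n) := by
      exact (Submodule.Quotient.mk_eq_zero (zSMulRange z (K.X n)) (x := x)).mp hx
    exact hx'
  exact ⟨hexact⟩

/-- The morphism of short exact sequences induced by `f`. -/
noncomputable def modzSESMap {R : Type*} [CommRing R] (z : R)
    {F K : CochainComplex (ModuleCat R) ℤ} (f : F ⟶ K) :
    modzSES z F ⟶ modzSES z K where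
  τ₁ := f
  τ₂ := f
  τ₃ := modzMap z f
  comm₁₂ := by
    ext n x
    show (z • LinearMap.id : K.X n →ₗ[R] K.X n) (f.f n x)
        = f.f n ((z • LinearMap.id : F.X n →ₗ[R] F.X n) x)
    simp
    exact (LinearMap.map_smul (f.f n).hom z x).symm
  comm₂₃ := by
    ext n x
    show (zSMulRange z (K.X n)).mkQ (f.f n x)
        = ((zSMulRange z (F.X n)).mapQ (zSMulRange z (K.X n)) (f.f n).hom (modzMap_le z f n))
            ((zSMulRange z (F.X n)).mkQ x)
    rfl

/-- Let `f : F ⟶ K` be a quasi-isomorphism of bounded cochain complexes of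
`R`-modules such that multiplication by `z` is injective on every term and on every cohomology
module of `F` and of `K`.  Then the induced chain map `F/zF ⟶ K/zK` between the termwise
quotient complexes is again a quasi-isomorphism. -/
theorem modzMap_quasiIso {R : Type*} [CommRing R] (z : R)
    {F K : CochainComplex (ModuleCat R) ℤ} (f : F ⟶ K)
    (hbddF : ∃ a b : ℤ, ∀ n : ℤ, (n < a ∨ b < n) → Limits.IsZero (F.X n))
    (hbddK : ∃ a b : ℤ, ∀ n : ℤ, (n < a ∨ b < n) → Limits.IsZero (K.X n))
    (hinjF : ∀ n : ℤ, Function.Injective fun x : F.X n => z • x)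
    (hinjK : ∀ n : ℤ, Function.Injective fun x : K.X n => z • x)
    (hinjHF : ∀ n : ℤ, Function.Injective fun x : F.homology n => z • x)
    (hinjHK : ∀ n : ℤ, Function.Injective fun x : K.homology n => z • x)
    (hf : QuasiIso f) :
    QuasiIso (modzMap z f) :=
  HomologicalComplex.HomologySequence.quasiIso_τ₃ (modzSESMap z f)
    (modzSES_shortExact z F hinjF) (modzSES_shortExact z K hinjK) hf hf
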